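/- Let z(t) solve ż = f(z) for a meromorphic f with maximal interval (a₀, b₀) and b₀ < ∞. If z₀ ∈ ℂ is a limit point of z(t) as t → b₀⁻ (i.e., z(sₙ) → z₀ along some sₙ → b₀⁻) and f(z₀) ≠ 0 and f is holomorphic at z₀, then a contradiction follows; equivalently, every finite limit point z₀ of z(t) as t → b₀⁻ satisfies f(z₀) = 0 or z₀ is a pole of f. -/

import Mathlib

open Set Filter Metric

/-- If the vector field is bounded by `M` on a ball and the trajectory starts near the center
and the time interval is short, the trajectory stays in the ball. -/
lemma stayInBall (F : ℂ → ℂ) (x₀ : ℂ) (R M : ℝ) (hM : 0 < M)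
    (hF : ∀ x ∈ Metric.closedBall x₀ R, ‖F x‖ ≤ M)
    (g : ℝ → ℂ) (t₁ T : ℝ) (h1 : t₁ ≤ T)
    (hder : ∀ t ∈ Set.Icc t₁ T, HasDerivAt g (F (g t)) t)
    (hstart : dist (g t₁) x₀ ≤ R / 2)
    (hT : M * (T - t₁) < R / 2) :
    ∀ t ∈ Set.Icc t₁ T, g t ∈ Metric.closedBall x₀ R := by
  have hR : 0 < R := by nlinarith [mul_nonneg hM.le (sub_nonneg.mpr h1)]
  set S := {t ∈ Set.Icc t₁ T | ∀ u ∈ Set.Icc t₁ t, dist (g u) x₀ ≤ R} with hS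
  have ht₁S : t₁ ∈ S := ⟨⟨le_refl _, h1⟩, fun u hu => by
    have : u = t₁ := le_antisymm hu.2 hu.1
    rw [this]; linarith⟩
  have hbdd : BddAbove S := ⟨T, fun x hx => hx.1.2⟩
  set τ := sSup S with hτdef
  have hτ1 : t₁ ≤ τ := le_csSup hbdd ht₁S
  have hτT : τ ≤ T := csSup_le ⟨t₁, ht₁S⟩ fun x hx => hx.1.2
  have hgc : ∀ u ∈ Set.Icc t₁ T, ContinuousAt g u := fun u hu => (hder u hu).continuousAt
  have key : ∀ u, t₁ ≤ u → u < τ → dist (g u) x₀ ≤ R := by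
    intro u hu huτ
    obtain ⟨t, htS, hut⟩ := exists_lt_of_lt_csSup ⟨t₁, ht₁S⟩ huτ
    exact htS.2 u ⟨hu, hut.le⟩
  have hτdist : dist (g τ) x₀ ≤ R := by
    rcases eq_or_lt_of_le hτ1 with h2 | h2
    · rw [← h2]; linarith
    · by_contra hcon
      push_neg at hcon
      have hc : ContinuousAt (fun u => dist (g u) x₀) τ :=
        (hgc τ ⟨hτ1, hτT⟩).dist continuousAt_const
      have h3' : ∀ᶠ u in nhds τ, R < dist (g u) x₀ := hc (lt_mem_nhds hcon)
      have h3 : ∀ᶠ u in nhdsWithin τ (Set.Iio τ), R < dist (g u) x₀ :=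
        h3'.filter_mono nhdsWithin_le_nhds
      have h4 : ∀ᶠ u in nhdsWithin τ (Set.Iio τ), t₁ < u :=
        (Filter.eventually_iff_exists_mem.mpr ⟨Set.Ioi t₁, Ioi_mem_nhds h2, fun u hu => hu⟩).filter_mono
          nhdsWithin_le_nhds
      obtain ⟨u, ⟨hu1, hu2⟩, hu3⟩ := ((h3.and h4).and self_mem_nhdsWithin).exists
      exact absurd (key u hu2.le hu3) (not_le.mpr hu1)
  have hτS : τ ∈ S := by
    refine ⟨⟨hτ1, hτT⟩, fun u hu => ?_⟩
    rcases lt_or_eq_of_le hu.2 with h | h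
    · exact key u hu.1 h
    · rw [h]; exact hτdist
  have hτeq : τ = T := by
    by_contra hne
    have hτlt : τ < T := lt_of_le_of_ne hτT hne
    have hmem : ∀ u ∈ Set.Icc t₁ τ, g u ∈ Metric.closedBall x₀ R := fun u hu => hτS.2 u hu
    have hmvt : ‖g τ - g t₁‖ ≤ M * ‖τ - t₁‖ :=
      Convex.norm_image_sub_le_of_norm_hasDerivWithin_le
        (fun u hu => (hder u ⟨hu.1, hu.2.trans hτT⟩).hasDerivWithinAt)
        (fun u hu => hF (g u) (hmem u hu)) (convex_Icc _ _) ⟨le_refl _, hτ1⟩ ⟨hτ1, le_refl _⟩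
    have h5 : dist (g τ) x₀ < R := by
      have hn : ‖τ - t₁‖ = τ - t₁ := Real.norm_of_nonneg (by linarith)
      have h6 : M * (τ - t₁) ≤ M * (T - t₁) := by nlinarith
      have h7 : dist (g τ) (g t₁) ≤ M * (τ - t₁) := by
        rw [dist_eq_norm]; rw [hn] at hmvt; exact hmvt
      calc dist (g τ) x₀ ≤ dist (g τ) (g t₁) + dist (g t₁) x₀ := dist_triangle _ _ _
        _ < R := by linarith
    have hc : ContinuousAt (fun u => dist (g u) x₀) τ :=
      (hgc τ ⟨hτ1, hτT⟩).dist continuousAt_const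
    obtain ⟨δ, hδ, hδ'⟩ := Metric.eventually_nhds_iff.mp (hc (gt_mem_nhds h5))
    set τ' := min T (τ + δ/2) with hτ'def
    have hττ' : τ < τ' := lt_min hτlt (by linarith)
    have hτ'S : τ' ∈ S := by
      refine ⟨⟨hτ1.trans hττ'.le, min_le_left _ _⟩, fun u hu => ?_⟩
      rcases le_or_gt u τ with h | h
      · exact hτS.2 u ⟨hu.1, h⟩
      · refine le_of_lt (hδ' ?_)
        have h8 : u ≤ τ + δ/2 := hu.2.trans (min_le_right _ _)
        rw [Real.dist_eq, abs_of_pos (by linarith)]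
        linarith
    exact absurd (le_csSup hbdd hτ'S) (not_le.mpr hττ')
  intro t ht
  exact hτS.2 t ⟨ht.1, ht.2.trans_eq hτeq.symm⟩

/-- Let `z(t)` solve `ż = f(z)` for `f` meromorphic on `ℂ`, on a maximal interval
`(a₀, b₀)` with `b₀ < ∞`. If `z₀ ∈ ℂ` is a limit point of `z(t)` as `t → b₀⁻`
(along some sequence `sₙ → b₀⁻`), `f` is holomorphic at `z₀` and `f z₀ ≠ 0`,
then a contradiction follows: every finite limit point is a zero or a pole of `f`. -/
theorem stmt2 (f : ℂ → ℂ) (hf : MeromorphicOn f Set.univ)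
    (z : ℝ → ℂ) (a₀ b₀ : ℝ) (hab : a₀ < b₀)
    (hz : ∀ t ∈ Set.Ioo a₀ b₀, HasDerivAt z (f (z t)) t)
    (hmax : ¬ ∃ (b₁ : ℝ) (w : ℝ → ℂ), b₀ < b₁ ∧
      (∀ t ∈ Set.Ioo a₀ b₁, HasDerivAt w (f (w t)) t) ∧
      (∀ t ∈ Set.Ioo a₀ b₀, w t = z t))
    (z₀ : ℂ) (s : ℕ → ℝ) (hs : ∀ k, s k ∈ Set.Ioo a₀ b₀)
    (hs2 : Filter.Tendsto s Filter.atTop (nhds b₀))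
    (hzs : Filter.Tendsto (fun k => z (s k)) Filter.atTop (nhds z₀))
    (hfz : AnalyticAt ℂ f z₀) (hfz0 : f z₀ ≠ 0) : False := by
  -- Lipschitz constant and bound for f near z₀
  obtain ⟨L, sN, hsN, hlip⟩ := (hfz.contDiffAt (n := 1)).exists_lipschitzOnWith
  obtain ⟨r0, hr0, hball⟩ := Metric.mem_nhds_iff.mp hsN
  set r := r0 / 2 with hrdef
  have hr : 0 < r := by positivity
  have hsub : Metric.closedBall z₀ r ⊆ sN :=
    (Metric.closedBall_subset_ball (by simp only [hrdef]; linarith)).trans hball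
  have hlip' : LipschitzOnWith L f (Metric.closedBall z₀ r) := hlip.mono hsub
  set M := ‖f z₀‖ + (L : ℝ) * r + 1 with hMdef
  have hM : 0 < M := by positivity
  have hbound : ∀ x ∈ Metric.closedBall z₀ r, ‖f x‖ ≤ M := by
    intro x hx
    have h1 : dist (f x) (f z₀) ≤ (L : ℝ) * dist x z₀ :=
      hlip'.dist_le_mul x hx z₀ (Metric.mem_closedBall_self hr.le)
    have h2 : dist x z₀ ≤ r := Metric.mem_closedBall.mp hx
    have h3 : ‖f x‖ ≤ ‖f z₀‖ + dist (f x) (f z₀) := by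
      rw [dist_eq_norm]
      calc ‖f x‖ = ‖f z₀ + (f x - f z₀)‖ := by ring_nf
        _ ≤ ‖f z₀‖ + ‖f x - f z₀‖ := norm_add_le _ _
    have h4 : (L : ℝ) * dist x z₀ ≤ (L : ℝ) * r :=
      mul_le_mul_of_nonneg_left h2 L.coe_nonneg
    linarith
  set ε := r / (2 * M) with hεdef
  have hε : 0 < ε := by positivity
  have hquarter : r / (4 * M) < ε := by
    rw [hεdef, div_lt_div_iff₀ (by positivity) (by positivity)]
    nlinarith
  have hq : 0 < r / (4 * M) := by positivity
  -- choose t₁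
  have h1 : ∀ᶠ k in Filter.atTop, b₀ - r / (4 * M) < s k :=
    hs2.eventually (eventually_gt_nhds (by linarith))
  have h2 : ∀ᶠ k in Filter.atTop, dist (z (s k)) z₀ < r / 2 := by
    have := hzs (Metric.ball_mem_nhds z₀ (by positivity : (0:ℝ) < r / 2))
    filter_upwards [this] with k hk
    exact Metric.mem_ball.mp hk
  obtain ⟨k, hk1, hk2⟩ := (h1.and h2).exists
  set t₁ := s k with ht₁def
  have ht₁ : t₁ ∈ Set.Ioo a₀ b₀ := hs k
  have ht₁b₀ : b₀ - t₁ < r / (4 * M) := by linarith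
  -- Picard-Lindelöf
  have e1 : ((r / 2).toNNReal : ℝ) = r / 2 := Real.coe_toNNReal _ (by positivity)
  have e2 : (M.toNNReal : ℝ) = M := Real.coe_toNNReal _ hM.le
  have hpl : IsPicardLindelof (fun _ => f) (tmin := t₁ - ε) (tmax := t₁ + ε)
      ⟨t₁, by linarith, by linarith⟩ (z t₁) (r / 2).toNNReal 0 M.toNNReal L :=
    { lipschitzOnWith := fun t _ => hlip'.mono (Metric.closedBall_subset_closedBall'
        (by have := hk2.le; simp only [dist_comm] at this ⊢; linarith [e1]))
      continuousOn := fun x _ => continuousOn_const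
      norm_le := fun t _ x hx => (hbound x (Metric.closedBall_subset_closedBall'
        (by have := hk2.le; linarith [Metric.mem_closedBall.mp hx, e1]) hx)).trans e2.ge
      mul_max_le := by
        simp only [tsub_zero, e1, e2, NNReal.coe_zero, sub_zero]
        rw [add_sub_cancel_left, sub_sub_cancel, max_self, hεdef]
        rw [show M * (r / (2 * M)) = r / 2 by field_simp]
      }
  obtain ⟨y, hy1, hy2⟩ := hpl.exists_eq_forall_mem_Icc_hasDerivWithinAt₀
  replace hy1 : y t₁ = z t₁ := hy1
  have hyD : ∀ t ∈ Set.Ioo (t₁ - ε) (t₁ + ε), HasDerivAt y (f (y t)) t := fun t ht =>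
    (hy2 t (Set.Ioo_subset_Icc_self ht)).hasDerivAt (Icc_mem_nhds ht.1 ht.2)
  have hb₀lt : b₀ < t₁ + ε := by linarith
  -- membership of z and y in the ball
  have hstayT : ∀ c, c ∈ Set.Ico t₁ b₀ → M * (c - t₁) < r / 2 := by
    intro c hc
    have h5 : c - t₁ < r / (4 * M) := by linarith [hc.2]
    have h6 : M * (c - t₁) < M * (r / (4 * M)) := mul_lt_mul_of_pos_left h5 hM
    have h7 : M * (r / (4 * M)) = r / 4 := by field_simp
    linarith
  have hzmem : ∀ c ∈ Set.Ico t₁ b₀, ∀ u ∈ Set.Icc t₁ c, z u ∈ Metric.closedBall z₀ r := by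
    intro c hc
    refine stayInBall f z₀ r M hM hbound z t₁ c hc.1 ?_ hk2.le (hstayT c hc)
    intro u hu
    exact hz u ⟨lt_of_lt_of_le ht₁.1 hu.1, lt_of_le_of_lt hu.2 hc.2⟩
  have hymem : ∀ c ∈ Set.Ico t₁ b₀, ∀ u ∈ Set.Icc t₁ c, y u ∈ Metric.closedBall z₀ r := by
    intro c hc
    refine stayInBall f z₀ r M hM hbound y t₁ c hc.1 ?_ (by rw [hy1]; exact hk2.le) (hstayT c hc)
    intro u hu
    exact hyD u ⟨by linarith [hu.1], by linarith [hu.2, hc.2]⟩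
  -- uniqueness: z = y on [t₁, b₀)
  have heq : ∀ u ∈ Set.Ico t₁ b₀, z u = y u := by
    intro u hu
    have huIcc : u ∈ Set.Icc t₁ u := ⟨hu.1, le_refl _⟩
    refine ODE_solution_unique_of_mem_Icc_right (v := fun _ => f)
      (s := fun _ => Metric.closedBall z₀ r) (K := L) (fun _ _ => hlip')
      ?_ ?_ ?_ ?_ ?_ ?_ hy1.symm huIcc
    · intro t ht
      exact (hz t ⟨lt_of_lt_of_le ht₁.1 ht.1, lt_of_le_of_lt ht.2 hu.2⟩).continuousAt.continuousWithinAt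
    · intro t ht
      exact (hz t ⟨lt_of_lt_of_le ht₁.1 ht.1, lt_of_lt_of_le (lt_of_lt_of_le ht.2 (le_refl u)) hu.2.le⟩).hasDerivWithinAt
    · intro t ht
      exact hzmem u hu t (Set.Ico_subset_Icc_self ht)
    · intro t ht
      exact (hyD t ⟨by linarith [ht.1], by linarith [ht.2, hu.2]⟩).continuousAt.continuousWithinAt
    · intro t ht
      exact (hyD t ⟨by linarith [ht.1], by linarith [ht.2, hu.2]⟩).hasDerivWithinAt
    · intro t ht
      exact hymem u hu t (Set.Ico_subset_Icc_self ht)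
  -- construct extension and contradict maximality
  apply hmax
  refine ⟨t₁ + ε, fun t => if t < b₀ then z t else y t, hb₀lt, ?_, ?_⟩
  · intro t ht
    rcases lt_or_ge t b₀ with h | h
    · have hwz : (fun t => if t < b₀ then z t else y t) =ᶠ[nhds t] z := by
        filter_upwards [Iio_mem_nhds h] with u hu
        exact if_pos hu
      have hd : HasDerivAt (fun t => if t < b₀ then z t else y t) (f (z t)) t :=
        (hz t ⟨ht.1, h⟩).congr_of_eventuallyEq hwz
      simpa only [if_pos h] using hd
    · have hwy : (fun t => if t < b₀ then z t else y t) =ᶠ[nhds t] y := by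
        filter_upwards [Ioo_mem_nhds (show t₁ < t by linarith [ht₁.2]) ht.2] with u hu
        by_cases hu' : u < b₀
        · rw [if_pos hu', heq u ⟨hu.1.le, hu'⟩]
        · rw [if_neg hu']
      have hd : HasDerivAt (fun t => if t < b₀ then z t else y t) (f (y t)) t :=
        (hyD t ⟨by linarith [ht₁.2], ht.2⟩).congr_of_eventuallyEq hwy
      simpa only [if_neg (not_lt.mpr h)] using hd
  · intro t ht
    exact if_pos ht.2
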